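/- Let D be a d×d complex matrix with 0 ≤ D ≤ 1 in the Loewner order and tr(D) ≤ 1, and let q₁, q₂ be orthogonal projections in M_d(ℂ) with tr(D q₁) = 1 − ε₁ and tr(D q₂) = 1 − ε₂ (note ε₂ ≥ 0 automatically). Then 1 − ε₁ − √ε₂ ≤ |tr(D q₂ q₁)|. -/

import Mathlib

open scoped ComplexOrder
open Matrix
open scoped MatrixOrder

lemma trace_re_nonneg_of_psd {d : ℕ} {A : Matrix (Fin d) (Fin d) ℂ} (hA : A.PosSemidef) :
    0 ≤ A.trace.re := by
  have h : ∀ i, 0 ≤ A i i := fun i => hA.diag_nonneg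
  have h2 : (0:ℝ) ≤ ∑ i, (A i i).re :=
    Finset.sum_nonneg fun i _ => (Complex.le_def.mp (h i)).1
  simpa [Matrix.trace, Matrix.diag, Complex.re_sum] using h2

lemma trace_sq_re_eq {d : ℕ} (M : Matrix (Fin d) (Fin d) ℂ) :
    (Mᴴ * M).trace.re = ∑ p : Fin d × Fin d, ‖M p.1 p.2‖ ^ 2 := by
  simp only [Matrix.trace, Matrix.diag, Matrix.mul_apply, Matrix.conjTranspose_apply,
    Fintype.sum_prod_type, Complex.re_sum]
  rw [Finset.sum_comm]
  congr 1; ext a; congr 1; ext b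
  rw [show star (M a b) = (starRingEnd ℂ) (M a b) from rfl, ← Complex.normSq_eq_conj_mul_self]
  simp [Complex.normSq_eq_norm_sq, ← Complex.ofReal_pow]

lemma trace_CS {d : ℕ} (A B : Matrix (Fin d) (Fin d) ℂ) :
    ‖(Aᴴ * B).trace‖ ≤
      Real.sqrt ((Aᴴ * A).trace.re) * Real.sqrt ((Bᴴ * B).trace.re) := by
  let x : EuclideanSpace ℂ (Fin d × Fin d) := WithLp.toLp 2 (fun p : Fin d × Fin d => A p.1 p.2)
  let y : EuclideanSpace ℂ (Fin d × Fin d) := WithLp.toLp 2 (fun p : Fin d × Fin d => B p.1 p.2)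
  have hxy : inner ℂ x y = (Aᴴ * B).trace := by
    simp only [PiLp.inner_apply, RCLike.inner_apply, Matrix.trace, Matrix.diag,
      Matrix.mul_apply, Matrix.conjTranspose_apply, Fintype.sum_prod_type, x, y,
      starRingEnd_apply]
    rw [Finset.sum_comm]
    exact Finset.sum_congr rfl fun _ _ => Finset.sum_congr rfl fun _ _ => mul_comm _ _
  have hx : ‖x‖ = Real.sqrt ((Aᴴ * A).trace.re) := by
    rw [EuclideanSpace.norm_eq, trace_sq_re_eq]
  have hy : ‖y‖ = Real.sqrt ((Bᴴ * B).trace.re) := by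
    rw [EuclideanSpace.norm_eq, trace_sq_re_eq]
  calc ‖(Aᴴ * B).trace‖ = ‖inner ℂ x y‖ := by rw [hxy]
    _ ≤ ‖x‖ * ‖y‖ := norm_inner_le_norm x y
    _ = _ := by rw [hx, hy]

/-- If `0 ≤ D ≤ 1` with `tr D ≤ 1` and `q₁, q₂` are orthogonal projections with
`tr (D q₁) = 1 - ε₁` and `tr (D q₂) = 1 - ε₂`, then `1 - ε₁ - √ε₂ ≤ |tr (D q₂ q₁)|`. -/
theorem trace_q2q1_lower_bound {d : ℕ} (D q₁ q₂ : Matrix (Fin d) (Fin d) ℂ) (ε₁ ε₂ : ℝ)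
    (hD : D.PosSemidef) (hD1 : ((1 : Matrix (Fin d) (Fin d) ℂ) - D).PosSemidef)
    (htrD : D.trace.re ≤ 1)
    (hq₁herm : q₁.IsHermitian) (hq₁idem : q₁ * q₁ = q₁)
    (hq₂herm : q₂.IsHermitian) (hq₂idem : q₂ * q₂ = q₂)
    (h1 : (D * q₁).trace = ((1 - ε₁ : ℝ) : ℂ))
    (h2 : (D * q₂).trace = ((1 - ε₂ : ℝ) : ℂ)) :
    1 - ε₁ - Real.sqrt ε₂ ≤ ‖(D * q₂ * q₁).trace‖ := by
  set S := CFC.sqrt D with hSdef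
  have hSsd : S.PosSemidef := (CFC.sqrt_nonneg D).posSemidef
  have hSS : S * S = D := CFC.sqrt_mul_sqrt_self D hD.nonneg
  have hSh : Sᴴ = S := hSsd.1
  set p : Matrix (Fin d) (Fin d) ℂ := 1 - q₂ with hp
  have hpherm : pᴴ = p := by
    simp [hp, Matrix.conjTranspose_sub, hq₂herm.eq]
  have hpidem : p * p = p := by
    simp only [hp, Matrix.mul_sub, Matrix.sub_mul, Matrix.one_mul, Matrix.mul_one, hq₂idem]
    abel
  -- general projection trace identity
  have key : ∀ q : Matrix (Fin d) (Fin d) ℂ, qᴴ = q → q * q = q →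
      (((S * q)ᴴ * (S * q)).trace = (D * q).trace ∧ 0 ≤ (D * q).trace.re) := by
    intro q hqh hqi
    have e1 : (S * q)ᴴ * (S * q) = qᴴ * D * q := by
      rw [Matrix.conjTranspose_mul, hSh, hqh]
      rw [Matrix.mul_assoc, ← Matrix.mul_assoc S S q, hSS, ← Matrix.mul_assoc]
    have e2 : (qᴴ * D * q).trace = (D * q).trace := by
      rw [hqh, Matrix.trace_mul_cycle, hqi, Matrix.trace_mul_comm]
    have e3 := trace_re_nonneg_of_psd (hD.conjTranspose_mul_mul_same q)
    exact ⟨e1 ▸ e2, by rw [← e2]; exact e3⟩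
  obtain ⟨hq₁tr, hq₁nn⟩ := key q₁ hq₁herm.eq hq₁idem
  obtain ⟨hptr, hpnn⟩ := key p hpherm hpidem
  obtain ⟨hcq₁tr, hcq₁nn⟩ := key (1 - q₁)
    (by simp [Matrix.conjTranspose_sub, hq₁herm.eq])
    (by simp only [Matrix.mul_sub, Matrix.sub_mul, Matrix.one_mul, Matrix.mul_one, hq₁idem]; abel)
  -- trace values
  have hDp : (D * p).trace = D.trace - ((1 - ε₂ : ℝ) : ℂ) := by
    rw [hp, Matrix.mul_sub, Matrix.mul_one, Matrix.trace_sub, h2]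
  have hDpre : (D * p).trace.re = D.trace.re - (1 - ε₂) := by
    rw [hDp]; simp
  have hDpre_le : (D * p).trace.re ≤ ε₂ := by rw [hDpre]; linarith
  have hq₁re : (D * q₁).trace.re = 1 - ε₁ := by rw [h1]; simp
  have hε₁0 : 0 ≤ 1 - ε₁ := hq₁re ▸ hq₁nn
  have hε₁1 : 1 - ε₁ ≤ 1 := by
    have : (D * (1 - q₁)).trace.re = D.trace.re - (1 - ε₁) := by
      rw [Matrix.mul_sub, Matrix.mul_one, Matrix.trace_sub, Complex.sub_re, h1]; simp
    rw [this] at hcq₁nn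
    linarith
  -- Cauchy-Schwarz
  have hCS := trace_CS (S * q₁) (S * p)
  have hAB : ((S * q₁)ᴴ * (S * p)).trace = (D * p * q₁).trace := by
    rw [Matrix.conjTranspose_mul, hSh, hq₁herm.eq]
    rw [Matrix.mul_assoc, ← Matrix.mul_assoc S S p, hSS]
    rw [← Matrix.mul_assoc, Matrix.trace_mul_cycle, Matrix.trace_mul_cycle]
  rw [hAB, hq₁tr, hptr] at hCS
  have hbound : ‖(D * p * q₁).trace‖ ≤ Real.sqrt ε₂ := by
    calc ‖(D * p * q₁).trace‖
        ≤ Real.sqrt ((D * q₁).trace.re) * Real.sqrt ((D * p).trace.re) := hCS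
      _ ≤ 1 * Real.sqrt ε₂ := by
          apply mul_le_mul
          · rw [hq₁re]; exact Real.sqrt_le_one.mpr hε₁1
          · exact Real.sqrt_le_sqrt hDpre_le
          · exact Real.sqrt_nonneg _
          · norm_num
      _ = Real.sqrt ε₂ := one_mul _
  -- decomposition
  have hdec : (D * q₁).trace = (D * q₂ * q₁).trace + (D * p * q₁).trace := by
    rw [← Matrix.trace_add]
    congr 1
    simp only [hp, Matrix.mul_sub, Matrix.sub_mul, Matrix.mul_one, Matrix.one_mul]
    abel
  have htri : 1 - ε₁ ≤ ‖(D * q₂ * q₁).trace‖ + ‖(D * p * q₁).trace‖ := by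
    have : ‖(D * q₁).trace‖ = 1 - ε₁ := by
      rw [h1, Complex.norm_real, Real.norm_eq_abs, abs_of_nonneg hε₁0]
    rw [← this, hdec]
    exact norm_add_le _ _
  linarith
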